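/- Let F be a field of characteristic 0, n ≥ 1, and let Aₙ be the nth Weyl algebra: the unital associative F-algebra with generators X₁, …, Xₙ, Y₁, …, Yₙ and defining relations XᵢXⱼ = XⱼXᵢ and YᵢYⱼ = YⱼYᵢ for all i, j, and YᵢXⱼ − XⱼYᵢ = δ_{i,j}·1 for all i, j. Fix nonzero scalars ζ₁, …, ζₙ ∈ F. If V is an Aₙ-module containing a nonzero vector w with V = Aₙ·w and Xᵢ·w = ζᵢ·w for all i, then V is a simple Aₙ-module. Moreover, any two Aₙ-modules of this kind (for the same ζ₁, …, ζₙ) are isomorphic as Aₙ-modules via an isomorphism carrying one cyclic generating vector to the other. -/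

import Mathlib

universe u v

/-- The defining relations of the `n`-th Weyl algebra: the `Xᵢ` commute, the `Yᵢ`
commute, and `YᵢXⱼ − XⱼYᵢ = δ_{i,j}`. -/
inductive WeylRel (F : Type u) [Field F] (n : ℕ) :
    FreeAlgebra F (Fin n ⊕ Fin n) → FreeAlgebra F (Fin n ⊕ Fin n) → Prop
  | XX (i j : Fin n) : WeylRel F n
      (FreeAlgebra.ι F (Sum.inl i) * FreeAlgebra.ι F (Sum.inl j))
      (FreeAlgebra.ι F (Sum.inl j) * FreeAlgebra.ι F (Sum.inl i))
  | YY (i j : Fin n) : WeylRel F n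
      (FreeAlgebra.ι F (Sum.inr i) * FreeAlgebra.ι F (Sum.inr j))
      (FreeAlgebra.ι F (Sum.inr j) * FreeAlgebra.ι F (Sum.inr i))
  | YX (i j : Fin n) : WeylRel F n
      (FreeAlgebra.ι F (Sum.inr i) * FreeAlgebra.ι F (Sum.inl j))
      (FreeAlgebra.ι F (Sum.inl j) * FreeAlgebra.ι F (Sum.inr i) +
        if i = j then 1 else 0)

/-- The `n`-th Weyl algebra `Aₙ` over `F`. -/
abbrev WeylAlgebra (F : Type u) [Field F] (n : ℕ) := RingQuot (WeylRel F n)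

/-- The generator `Xᵢ` of the Weyl algebra. -/
noncomputable def weylX (F : Type u) [Field F] (n : ℕ) (i : Fin n) : WeylAlgebra F n :=
  RingQuot.mkAlgHom F (WeylRel F n) (FreeAlgebra.ι F (Sum.inl i))

/-- The generator `Yᵢ` of the Weyl algebra. -/
noncomputable def weylY (F : Type u) [Field F] (n : ℕ) (i : Fin n) : WeylAlgebra F n :=
  RingQuot.mkAlgHom F (WeylRel F n) (FreeAlgebra.ι F (Sum.inr i))

open MvPolynomial

namespace Stmt5Aux

variable {F : Type u} [Field F] {n : ℕ}

/-- coefficient formula for pderiv -/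
theorem coeff_pderiv (i : Fin n) (p : MvPolynomial (Fin n) F) (γ : Fin n →₀ ℕ) :
    coeff γ (pderiv i p) = ((γ i : F) + 1) * coeff (γ + Finsupp.single i 1) p := by
  induction p using MvPolynomial.induction_on' with
  | add p q hp hq => simp [hp, hq, mul_add]
  | monomial s a =>
    rw [pderiv_monomial, coeff_monomial, coeff_monomial]
    split_ifs with h1 h2 h2
    · have hsi : s i = γ i + 1 := by
        rw [h2]; simp [Finsupp.add_apply, Finsupp.single_apply]
      rw [hsi]; push_cast; ring
    · -- s - single i 1 = γ but s ≠ γ + single i 1; then s i = 0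
      have hsi : s i = 0 := by
        by_contra hne
        apply h2
        ext j
        have h1j := DFunLike.congr_fun h1 j
        simp only [Finsupp.tsub_apply, Finsupp.single_apply, Finsupp.add_apply] at h1j ⊢
        by_cases hji : i = j
        · subst hji; simp at h1j ⊢; omega
        · simp [hji] at h1j ⊢; omega
      simp [hsi]
    · exfalso; apply h1; subst h2
      ext j
      simp only [Finsupp.tsub_apply, Finsupp.single_apply, Finsupp.add_apply]
      omega
    · simp

theorem pderiv_comm' (i j : Fin n) (p : MvPolynomial (Fin n) F) :
    pderiv i (pderiv j p) = pderiv j (pderiv i p) := by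
  rcases eq_or_ne i j with rfl | hij
  · rfl
  · ext γ
    rw [coeff_pderiv, coeff_pderiv, coeff_pderiv, coeff_pderiv]
    have h1 : ((γ + Finsupp.single i 1 : Fin n →₀ ℕ)) j = γ j := by
      simp [Finsupp.add_apply, Finsupp.single_apply, hij]
    have h2 : ((γ + Finsupp.single j 1 : Fin n →₀ ℕ)) i = γ i := by
      simp [Finsupp.add_apply, Finsupp.single_apply, Ne.symm hij]
    rw [h1, h2, add_right_comm]
    ring


variable (ζ : Fin n → F)

local notation "A" => WeylAlgebra F n
local notation "P" => MvPolynomial (Fin n) F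

/-- the generators' images in `End F P` -/
noncomputable def gens : Fin n ⊕ Fin n → Module.End F P :=
  Sum.elim (fun i => ζ i • (1 : Module.End F P) - (pderiv i).toLinearMap)
    (fun i => Algebra.lmul F P (X i))


theorem lmul_apply' (q p : P) : Algebra.lmul F P q p = q * p := rfl

theorem gens_rel {a b : FreeAlgebra F (Fin n ⊕ Fin n)} (h : WeylRel F n a b) :
    FreeAlgebra.lift F (gens ζ) a = FreeAlgebra.lift F (gens ζ) b := by
  induction h with
  | XX i j =>
    rw [map_mul, map_mul, FreeAlgebra.lift_ι_apply, FreeAlgebra.lift_ι_apply, gens,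
      Sum.elim_inl, Sum.elim_inl]
    refine LinearMap.ext fun p => ?_
    simp only [Module.End.mul_apply, LinearMap.sub_apply, LinearMap.smul_apply,
      Module.End.one_apply, Derivation.coeFn_coe, map_sub, map_smul, smul_sub]
    rw [pderiv_comm' i j]
    module
  | YY i j =>
    rw [map_mul, map_mul]
    simp only [FreeAlgebra.lift_ι_apply, gens, Sum.elim_inr]
    rw [← map_mul, ← map_mul, mul_comm (X i : P) (X j)]
  | YX i j =>
    rw [map_mul, map_add, map_mul]
    simp only [FreeAlgebra.lift_ι_apply, gens, Sum.elim_inl, Sum.elim_inr]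
    have hite : (FreeAlgebra.lift F (Sum.elim (fun i => ζ i • (1 : Module.End F P) - (pderiv i).toLinearMap)
        (fun i => Algebra.lmul F P (X i)))) (if i = j then 1 else 0)
        = if i = j then (1 : Module.End F P) else 0 := by
      split_ifs <;> simp
    rw [hite]
    refine LinearMap.ext fun p => ?_
    simp only [Module.End.mul_apply, LinearMap.sub_apply, LinearMap.smul_apply,
      Module.End.one_apply, LinearMap.add_apply, Derivation.coeFn_coe, lmul_apply']
    rw [pderiv_mul]
    rcases eq_or_ne i j with rfl | hij
    · rw [if_pos rfl, pderiv_X_self, Module.End.one_apply, mul_sub, mul_smul_comm]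
      ring_nf
    · rw [if_neg hij, pderiv_X_of_ne hij, LinearMap.zero_apply, mul_sub, mul_smul_comm]
      ring_nf

/-- the representation of the Weyl algebra on polynomials -/
noncomputable def rho : WeylAlgebra F n →ₐ[F] Module.End F P :=
  RingQuot.liftAlgHom F ⟨FreeAlgebra.lift F (gens ζ), fun _ _ h => gens_rel ζ h⟩

theorem rho_X (i : Fin n) :
    rho ζ (weylX F n i) = ζ i • (1 : Module.End F P) - (pderiv i).toLinearMap := by
  rw [weylX, rho, RingQuot.liftAlgHom_mkAlgHom_apply, FreeAlgebra.lift_ι_apply, gens,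
    Sum.elim_inl]

theorem rho_Y (i : Fin n) :
    rho ζ (weylY F n i) = Algebra.lmul F P (X i) := by
  rw [weylY, rho, RingQuot.liftAlgHom_mkAlgHom_apply, FreeAlgebra.lift_ι_apply, gens,
    Sum.elim_inr]


theorem Ycomm (i j : Fin n) : weylY F n i * weylY F n j = weylY F n j * weylY F n i := by
  have h := RingQuot.mkAlgHom_rel F (WeylRel.YY (F := F) (n := n) i j)
  simpa only [map_mul, weylY] using h

theorem XYcomm (i j : Fin n) :
    weylX F n j * weylY F n i =
      weylY F n i * weylX F n j - (if i = j then 1 else 0) := by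
  have h := RingQuot.mkAlgHom_rel F (WeylRel.YX (F := F) (n := n) i j)
  rw [map_mul, map_add] at h
  have hite : RingQuot.mkAlgHom F (WeylRel F n) (if i = j then 1 else 0)
      = (if i = j then 1 else 0 : A) := by split_ifs <;> simp
  rw [hite, map_mul] at h
  rw [weylX, weylY]
  exact (eq_sub_of_add_eq h.symm)

/-- The map sending a polynomial in the `Yᵢ` into the Weyl algebra. -/
noncomputable def Th : MvPolynomial (Fin n) F →ₐ[F] WeylAlgebra F n := by
  letI : CommSemiring (Algebra.adjoin F (Set.range (weylY F n))) :=
    Algebra.adjoinCommSemiringOfComm F (by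
      rintro a ⟨i, rfl⟩ b ⟨j, rfl⟩; exact Ycomm i j)
  exact ((Algebra.adjoin F (Set.range (weylY F n))).val).comp
    (MvPolynomial.aeval fun i => (⟨weylY F n i, Algebra.subset_adjoin ⟨i, rfl⟩⟩ :
      Algebra.adjoin F (Set.range (weylY F n))))

theorem Th_X (i : Fin n) : (Th : MvPolynomial (Fin n) F →ₐ[F] A) (X i) = weylY F n i := by
  simp [Th]

theorem Th_C (a : F) : (Th : MvPolynomial (Fin n) F →ₐ[F] A) (C a) = algebraMap F A a := by
  rw [← MvPolynomial.algebraMap_eq, AlgHom.commutes]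

theorem rho_Th : (rho ζ).comp (Th (F := F) (n := n)) = Algebra.lmul F P :=
  MvPolynomial.algHom_ext fun i => by
    rw [AlgHom.comp_apply, Th_X, rho_Y]

theorem rho_Th_apply (p q : P) : rho ζ (Th p) q = p * q := by
  have h := DFunLike.congr_fun (rho_Th ζ) p
  rw [AlgHom.comp_apply] at h
  rw [h]; rfl

/-- The left ideal generated by the `Xᵢ - ζᵢ`. -/
noncomputable def L : Submodule (WeylAlgebra F n) (WeylAlgebra F n) :=
  Submodule.span (WeylAlgebra F n)
    (Set.range fun i => weylX F n i - algebraMap F (WeylAlgebra F n) (ζ i))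

theorem rho_L_one {l : A} (hl : l ∈ L ζ) : rho ζ l (1 : P) = 0 := by
  induction hl using Submodule.span_induction with
  | mem x hx =>
    obtain ⟨i, rfl⟩ := hx
    rw [map_sub, LinearMap.sub_apply, rho_X, AlgHom.commutes,
      Module.algebraMap_end_apply, LinearMap.sub_apply, LinearMap.smul_apply,
      Module.End.one_apply, Derivation.coeFn_coe, pderiv_one]
    abel
  | zero => simp
  | add x y _ _ hx hy => rw [map_add, LinearMap.add_apply, hx, hy, add_zero]
  | smul a x _ hx => rw [smul_eq_mul, map_mul, Module.End.mul_apply, hx, map_zero]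

theorem Xcomm (p : P) (i : Fin n) :
    weylX F n i * Th p = Th p * weylX F n i - Th (pderiv i p) := by
  induction p using MvPolynomial.induction_on with
  | C a => rw [Th_C, pderiv_C, map_zero, sub_zero, Algebra.commutes]
  | add p q hp hq =>
    rw [map_add, map_add, mul_add, hp, hq, add_mul, map_add]
    abel
  | mul_X p j hp =>
    rw [map_mul, Th_X, pderiv_mul, ← mul_assoc, hp, sub_mul, mul_assoc, XYcomm j i,
      map_add, map_mul, Th_X]
    rcases eq_or_ne i j with rfl | hij
    · rw [if_pos rfl, pderiv_X_self, mul_one, mul_sub, mul_one, mul_assoc]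
      abel
    · rw [if_neg (Ne.symm hij), pderiv_X_of_ne (Ne.symm hij), mul_zero, map_zero, sub_zero,
        add_zero, mul_assoc]

theorem htop : Algebra.adjoin F (Set.range fun s : Fin n ⊕ Fin n =>
    RingQuot.mkAlgHom F (WeylRel F n) (FreeAlgebra.ι F s)) = ⊤ := by
  have : (Set.range fun s : Fin n ⊕ Fin n =>
      RingQuot.mkAlgHom F (WeylRel F n) (FreeAlgebra.ι F s))
      = (RingQuot.mkAlgHom F (WeylRel F n)) ''
        (Set.range (FreeAlgebra.ι F (X := Fin n ⊕ Fin n))) := by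
    rw [← Set.range_comp]; rfl
  rw [this, Algebra.adjoin_image, FreeAlgebra.adjoin_range_ι, Algebra.map_top]
  rw [AlgHom.range_eq_top]
  exact RingQuot.mkAlgHom_surjective F _

theorem decomp (a : A) : ∃ p : P, a - Th p ∈ L ζ := by
  have key : ∀ a : A, ∀ b : A, (∃ p : P, b - Th p ∈ L ζ) →
      ∃ q : P, a * b - Th q ∈ L ζ := by
    intro a
    have ha : a ∈ Algebra.adjoin F (Set.range fun s : Fin n ⊕ Fin n =>
        RingQuot.mkAlgHom F (WeylRel F n) (FreeAlgebra.ι F s)) := by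
      rw [htop]; exact Algebra.mem_top
    induction ha using Algebra.adjoin_induction with
    | mem x hx =>
      obtain ⟨s, rfl⟩ := hx
      rcases s with i | i
      · -- X i case
        rintro b ⟨p, hp⟩
        refine ⟨p * C (ζ i) - pderiv i p, ?_⟩
        have e1 : weylX F n i * b - Th (p * C (ζ i) - pderiv i p)
            = Th p * (weylX F n i - algebraMap F A (ζ i))
              + weylX F n i * (b - Th p) := by
          rw [map_sub, map_mul, Th_C, mul_sub (weylX F n i), Xcomm, mul_sub (Th p)]
          abel
        show weylX F n i * b - _ ∈ L ζ
        rw [e1]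
        exact Submodule.add_mem _
          (Submodule.smul_mem _ _ (Submodule.subset_span ⟨i, rfl⟩))
          (Submodule.smul_mem _ _ hp)
      · -- Y i case
        rintro b ⟨p, hp⟩
        refine ⟨X i * p, ?_⟩
        have e1 : weylY F n i * b - Th (X i * p) = weylY F n i * (b - Th p) := by
          rw [map_mul, Th_X, mul_sub]
        show weylY F n i * b - _ ∈ L ζ
        rw [e1]
        exact Submodule.smul_mem _ _ hp
    | algebraMap r =>
      rintro b ⟨p, hp⟩
      refine ⟨C r * p, ?_⟩
      have e1 : algebraMap F A r * b - Th (C r * p)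
          = algebraMap F A r * (b - Th p) := by
        rw [map_mul, Th_C, mul_sub]
      rw [e1]
      exact Submodule.smul_mem _ _ hp
    | add x y hx hy hxi hyi =>
      rintro b hb
      obtain ⟨q₁, h₁⟩ := hxi b hb
      obtain ⟨q₂, h₂⟩ := hyi b hb
      refine ⟨q₁ + q₂, ?_⟩
      have e1 : (x + y) * b - Th (q₁ + q₂) = (x * b - Th q₁) + (y * b - Th q₂) := by
        rw [map_add, add_mul]; abel
      rw [e1]
      exact Submodule.add_mem _ h₁ h₂
    | mul x y hx hy hxi hyi =>
      rintro b hb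
      obtain ⟨q₂, h₂⟩ := hyi b hb
      obtain ⟨q, hq⟩ := hxi (y * b) ⟨q₂, h₂⟩
      exact ⟨q, by rwa [← mul_assoc] at hq⟩
  have h1 : ∃ p : P, (1 : A) - Th p ∈ L ζ := ⟨1, by rw [map_one, sub_self]; exact zero_mem _⟩
  obtain ⟨p, hp⟩ := key a 1 h1
  exact ⟨p, by rwa [mul_one] at hp⟩

theorem mem_L_of_rho_one_eq_zero {a : A} (h : rho ζ a (1 : P) = 0) : a ∈ L ζ := by
  obtain ⟨p, hp⟩ := decomp ζ a
  have h2 : rho ζ (a - Th p) (1 : P) = 0 := rho_L_one ζ hp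
  rw [map_sub, LinearMap.sub_apply, h, rho_Th_apply, mul_one, zero_sub, neg_eq_zero] at h2
  rw [h2, map_zero, sub_zero] at hp
  exact hp


theorem exists_inv [CharZero F] (a : A) (ha : rho ζ a (1 : P) ≠ 0) :
    ∃ b : A, (1 : A) - b * a ∈ L ζ := by
  suffices H : ∀ d : ℕ, ∀ a : A, rho ζ a (1 : P) ≠ 0 → (rho ζ a (1 : P)).totalDegree ≤ d →
      ∃ b : A, (1 : A) - b * a ∈ L ζ from H _ a ha le_rfl
  intro d
  induction d with
  | zero =>
    intro a ha hd
    set p := rho ζ a (1 : P) with hp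
    have hd0 : p.totalDegree = 0 := le_antisymm hd (Nat.zero_le _)
    have hC : p = C (coeff 0 p) := by
      ext m
      rcases eq_or_ne m 0 with rfl | hm
      · simp
      · rw [coeff_C, if_neg (Ne.symm hm)]
        by_contra hne
        have hms : m ∈ p.support := mem_support_iff.2 hne
        have h0 := (totalDegree_eq_zero_iff _ p).1 hd0 m hms
        exact hm (Finsupp.ext fun j => h0 j)
    have hc : coeff 0 p ≠ 0 := by
      intro h
      apply ha
      rw [hC, h, map_zero]
    obtain ⟨c, hCc, hc⟩ : ∃ c, p = C c ∧ c ≠ 0 := ⟨coeff 0 p, hC, hc⟩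
    refine ⟨algebraMap F A c⁻¹, ?_⟩
    apply mem_L_of_rho_one_eq_zero
    rw [map_sub, LinearMap.sub_apply]
    simp only [map_one, Module.End.one_apply]
    rw [map_mul, Module.End.mul_apply, AlgHom.commutes, Module.algebraMap_end_apply, ← hp]
    rw [hCc, MvPolynomial.smul_eq_C_mul, ← map_mul, inv_mul_cancel₀ hc, map_one, sub_self]
  | succ k ih =>
    intro a ha hd
    by_cases hk : (rho ζ a (1 : P)).totalDegree ≤ k
    · exact ih a ha hk
    set p := rho ζ a (1 : P) with hp
    have hdeg : p.totalDegree = k + 1 := le_antisymm hd (not_le.1 hk)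
    have hsupp : p.support.Nonempty := by
      rw [MvPolynomial.support_nonempty]
      exact ha
    obtain ⟨m, hm, hms⟩ := Finset.exists_mem_eq_sup _ hsupp (fun m : Fin n →₀ ℕ => m.sum fun _ e => e)
    have hsum : (m.sum fun _ e => e) = k + 1 := by
      have h2 := hdeg
      rw [MvPolynomial.totalDegree, hms] at h2
      exact h2
    obtain ⟨i, hi⟩ : ∃ i, m i ≠ 0 := by
      by_contra h
      push_neg at h
      have hm0 : m = 0 := Finsupp.ext h
      rw [hm0, Finsupp.sum_zero_index] at hsum
      omega
    have hme : (m - Finsupp.single i 1) + Finsupp.single i 1 = m := by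
      ext j
      rcases eq_or_ne i j with rfl | hji
      · simp [Finsupp.add_apply, Finsupp.tsub_apply, Finsupp.single_apply]
        omega
      · simp [Finsupp.add_apply, Finsupp.tsub_apply, Finsupp.single_apply, hji]
    have hsum_add : ∀ γ : Fin n →₀ ℕ,
        ((γ + Finsupp.single i 1).sum fun _ e => e) = (γ.sum fun _ e => e) + 1 := fun γ => by
      rw [Finsupp.sum_add_index' (fun _ => rfl) (fun _ _ _ => rfl),
        Finsupp.sum_single_index rfl]
    have hco : coeff (m - Finsupp.single i 1) (pderiv i p) ≠ 0 := by
      rw [coeff_pderiv, hme]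
      refine mul_ne_zero ?_ (mem_support_iff.1 hm)
      have hcast : ((((m - Finsupp.single i 1 : Fin n →₀ ℕ)) i : ℕ) : F) + 1
          = ((((m - Finsupp.single i 1 : Fin n →₀ ℕ)) i + 1 : ℕ) : F) := by push_cast; ring
      rw [hcast]
      exact Nat.cast_ne_zero.2 (Nat.succ_ne_zero _)
    have hpne : pderiv i p ≠ 0 := fun h => hco (by rw [h, coeff_zero])
    have hdlt : (pderiv i p).totalDegree ≤ k := by
      show (pderiv i p).support.sup (fun s => s.sum fun _ e => e) ≤ k
      refine Finset.sup_le fun γ hγ => ?_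
      have hγ1 : coeff γ (pderiv i p) ≠ 0 := mem_support_iff.1 hγ
      rw [coeff_pderiv] at hγ1
      have hγ2 : coeff (γ + Finsupp.single i 1) p ≠ 0 := right_ne_zero_of_mul hγ1
      have hγ3 := le_totalDegree (mem_support_iff.2 hγ2)
      rw [hdeg, hsum_add] at hγ3
      omega
    have ha' : rho ζ ((algebraMap F A (ζ i) - weylX F n i) * a) (1 : P) = pderiv i p := by
      rw [map_mul, Module.End.mul_apply, ← hp, map_sub, LinearMap.sub_apply,
        AlgHom.commutes, Module.algebraMap_end_apply, rho_X, LinearMap.sub_apply,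
        LinearMap.smul_apply, Module.End.one_apply, Derivation.coeFn_coe]
      abel
    obtain ⟨b', hb'⟩ := ih ((algebraMap F A (ζ i) - weylX F n i) * a)
      (by rw [ha']; exact hpne) (by rw [ha']; exact hdlt)
    exact ⟨b' * (algebraMap F A (ζ i) - weylX F n i), by rwa [mul_assoc]⟩

theorem L_ne_top : L ζ ≠ ⊤ := by
  intro h
  have h1 : (1 : A) ∈ L ζ := by rw [h]; trivial
  have h2 := rho_L_one ζ h1
  simp only [map_one, Module.End.one_apply] at h2
  exact one_ne_zero h2

theorem L_coatom [CharZero F] : IsCoatom (L ζ) := by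
  refine ⟨L_ne_top ζ, fun J hJ => ?_⟩
  obtain ⟨a, haJ, haL⟩ := SetLike.exists_of_lt hJ
  have hρ : rho ζ a (1 : P) ≠ 0 := fun h => haL (mem_L_of_rho_one_eq_zero ζ h)
  obtain ⟨b, hb⟩ := exists_inv ζ a hρ
  have h1 : (1 : A) ∈ J := by
    have hba : b * a ∈ J := by
      have := J.smul_mem b haJ
      rwa [smul_eq_mul] at this
    have := J.add_mem (hJ.le hb) hba
    rwa [sub_add_cancel] at this
  rw [Submodule.eq_top_iff']
  intro x
  have := J.smul_mem x h1
  rwa [smul_eq_mul, mul_one] at this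

theorem model_iso [CharZero F] {V : Type v} [AddCommGroup V] [Module (WeylAlgebra F n) V]
    (w : V) (hw : w ≠ 0) (hcyc : ∀ v : V, ∃ a : WeylAlgebra F n, a • w = v)
    (hwhit : ∀ i, weylX F n i • w = algebraMap F (WeylAlgebra F n) (ζ i) • w) :
    ∃ e : (WeylAlgebra F n ⧸ L ζ) ≃ₗ[WeylAlgebra F n] V,
      e (Submodule.Quotient.mk 1) = w := by
  let φ : A →ₗ[A] V := LinearMap.toSpanSingleton A V w
  have hφ : ∀ a : A, φ a = a • w := fun a => rfl
  have hsurj : Function.Surjective φ := fun v => hcyc v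
  have hLk : ∀ l ∈ L ζ, l • w = 0 := by
    intro l hl
    induction hl using Submodule.span_induction with
    | mem x hx =>
      obtain ⟨i, rfl⟩ := hx
      rw [sub_smul, hwhit, sub_self]
    | zero => rw [zero_smul]
    | add x y _ _ hx hy => rw [add_smul, hx, hy, add_zero]
    | smul a x _ hx => rw [smul_eq_mul, mul_smul, hx, smul_zero]
  have hker : LinearMap.ker φ = L ζ := by
    apply le_antisymm
    · intro a haker
      rw [LinearMap.mem_ker, hφ] at haker
      by_contra haL
      have hρ : rho ζ a (1 : P) ≠ 0 := fun h => haL (mem_L_of_rho_one_eq_zero ζ h)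
      obtain ⟨b, hb⟩ := exists_inv ζ a hρ
      have h0 : ((1 : A) - b * a) • w = 0 := hLk _ hb
      rw [sub_smul, one_smul, mul_smul, haker, smul_zero, sub_zero] at h0
      exact hw h0
    · intro l hl
      rw [LinearMap.mem_ker, hφ]
      exact hLk l hl
  refine ⟨(Submodule.quotEquivOfEq (L ζ) (LinearMap.ker φ) hker.symm).trans
      (φ.quotKerEquivOfSurjective hsurj), ?_⟩
  rw [LinearEquiv.trans_apply, Submodule.quotEquivOfEq_mk]
  show φ.quotKerEquivOfSurjective hsurj (Submodule.Quotient.mk 1) = w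
  have : φ.quotKerEquivOfSurjective hsurj (Submodule.Quotient.mk 1) = φ 1 := rfl
  rw [this, hφ, one_smul]

end Stmt5Aux

/-- Over a field of characteristic `0`, every Whittaker module
`V = Aₙ·w`, `Xᵢ·w = ζᵢ·w` (all `ζᵢ ≠ 0`, `w ≠ 0`) for the `n`-th Weyl algebra is simple,
and any two Whittaker modules of the same type `ζ` are isomorphic via an isomorphism
matching the cyclic Whittaker vectors. -/
theorem stmt_5 {F : Type u} [Field F] [CharZero F] (n : ℕ) (hn : 1 ≤ n)
    (ζ : Fin n → F) (hζ : ∀ i, ζ i ≠ 0)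
    (V : Type v) [AddCommGroup V] [Module (WeylAlgebra F n) V]
    (w : V) (hw : w ≠ 0)
    (hcyc : ∀ v : V, ∃ a : WeylAlgebra F n, a • w = v)
    (hwhit : ∀ i : Fin n,
      weylX F n i • w = algebraMap F (WeylAlgebra F n) (ζ i) • w) :
    IsSimpleModule (WeylAlgebra F n) V ∧
      ∀ (V' : Type v) [AddCommGroup V'] [Module (WeylAlgebra F n) V'] (w' : V'),
        w' ≠ 0 → (∀ v : V', ∃ a : WeylAlgebra F n, a • w' = v) →
        (∀ i : Fin n,
          weylX F n i • w' = algebraMap F (WeylAlgebra F n) (ζ i) • w') →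
        ∃ e : V ≃ₗ[WeylAlgebra F n] V', e w = w' := by
  
  obtain ⟨e, he⟩ := Stmt5Aux.model_iso ζ w hw hcyc hwhit
  haveI : IsSimpleModule (WeylAlgebra F n) (WeylAlgebra F n ⧸ Stmt5Aux.L ζ) :=
    isSimpleModule_iff_isCoatom.2 (Stmt5Aux.L_coatom ζ)
  refine ⟨IsSimpleModule.congr e.symm, ?_⟩
  intro V' _ _ w' hw' hcyc' hwhit'
  obtain ⟨e', he'⟩ := Stmt5Aux.model_iso ζ w' hw' hcyc' hwhit'
  refine ⟨e.symm.trans e', ?_⟩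
  rw [LinearEquiv.trans_apply, ← he, LinearEquiv.symm_apply_apply, he']
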